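/- Assume m′+d > r. For every path p ∈ X_d(m,m′), every 1 ≤ s ≤ m−m′ and every 1 ≤ i ≤ d−1: if k^{(s)}_i is unbarred then k^{(s)}_i < k^{(s)}_{i+1} in the order of J and l^{(s)}_i ≤ l^{(s)}_{i+1}; if k^{(s)}_i is barred then k^{(s)}_i < k^{(s)}_{i+1} in the order of J and l^{(s)}_i = l^{(s)}_{i+1} + 1. -/

import Mathlib

noncomputable section
open Matrix BigOperators

namespace CTypeMinors

/-- Standard basis vector of `ℂ^{2r}`, indexed by a natural number `a` (0-indexed):
`a = j - 1` encodes the unbarred element `j ∈ J`, and `a = 2r - j` encodes the barred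
element `j̄ ∈ J` (this is the bijection `ι` shifted to be 0-indexed; the natural order
on `{0, …, 2r-1}` corresponds to the total order on `J`). -/
def vv (r a : ℕ) : Fin (2*r) → ℂ := fun k => if (k : ℕ) = a then 1 else 0

/-- `v_j` for unbarred `j` (`1 ≤ j ≤ r`); note `vu r (r+1) = v_{r̄}`. -/
def vu (r j : ℕ) : Fin (2*r) → ℂ := vv r (j - 1)

/-- `v_{j̄}` for barred `j̄` (`1 ≤ j ≤ r`). -/
def vb (r j : ℕ) : Fin (2*r) → ℂ := vv r (2*r - j)

/-- The matrix `f_i` (`1 ≤ i ≤ r`): `f_i v_i = v_{i+1}`, `f_i v_{(i+1)‾} = v_{ī}`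
(for `i = r` these two conditions both read `f_r v_r = v_{r̄}`), all other basis
vectors are sent to `0`. -/
def fMat (r i : ℕ) : Matrix (Fin (2*r)) (Fin (2*r)) ℂ :=
  Matrix.of fun k l =>
    if ((l : ℕ) + 1 = i ∧ (k : ℕ) = i) ∨ ((l : ℕ) + i + 1 = 2*r ∧ (k : ℕ) + i = 2*r)
    then 1 else 0

/-- `e_i = f_iᵀ`. -/
def eMat (r i : ℕ) : Matrix (Fin (2*r)) (Fin (2*r)) ℂ := (fMat r i)ᵀ

/-- `x_i(t) = 1 + t e_i`. -/
def xMat (r i : ℕ) (t : ℂ) : Matrix (Fin (2*r)) (Fin (2*r)) ℂ := 1 + t • eMat r i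

/-- `y_i(t) = 1 + t f_i`. -/
def yMat (r i : ℕ) (t : ℂ) : Matrix (Fin (2*r)) (Fin (2*r)) ℂ := 1 + t • fMat r i

/-- `α_i^∨(c)`: diagonal, acting by `c` on `v_i, v_{(i+1)‾}`, by `c⁻¹` on
`v_{i+1}, v_{ī}`, and by `1` elsewhere (for `i = r`: by `c` on `v_r`, `c⁻¹` on `v_{r̄}`). -/
def alMat (r i : ℕ) (c : ℂ) : Matrix (Fin (2*r)) (Fin (2*r)) ℂ :=
  Matrix.diagonal fun k =>
    if (k : ℕ) + 1 = i ∨ (k : ℕ) + i + 1 = 2*r then c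
    else if (k : ℕ) = i ∨ (k : ℕ) + i = 2*r then c⁻¹
    else 1

/-- `x_{-i}(t) = y_i(t) ⬝ α_i^∨(t⁻¹)`. -/
def xmMat (r i : ℕ) (t : ℂ) : Matrix (Fin (2*r)) (Fin (2*r)) ℂ :=
  yMat r i t * alMat r i t⁻¹

/-- Entry of a `2r × 2r` matrix at (0-indexed) natural number indices. -/
def ent {r : ℕ} (X : Matrix (Fin (2*r)) (Fin (2*r)) ℂ) (a b : ℕ) : ℂ :=
  dotProduct (vv r a) (X.mulVec (vv r b))

/-- Ordered product `g 1 * g 2 * ⋯ * g n` of matrices. -/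
def oprod {N : ℕ} (g : ℕ → Matrix (Fin N) (Fin N) ℂ) (n : ℕ) : Matrix (Fin N) (Fin N) ℂ :=
  ((List.range n).map fun l => g (l + 1)).prod

/-- `x^L(Y) = (x_{-1}(Y_{1,1})⋯x_{-r}(Y_{1,r})) ⋯ x_{-1}(Y_{m,1})⋯x_{-d}(Y_{m,d})`. -/
def xL (r m d : ℕ) (Y : ℕ → ℕ → ℂ) : Matrix (Fin (2*r)) (Fin (2*r)) ℂ :=
  oprod (fun s => oprod (fun l => xmMat r l (Y s l)) (if s = m then d else r)) m

/-- The 0-indexed row `ι(R_i)` for `i : Fin d` (0-indexed `i`): the `i`-th entry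
of `R` is `v_{m'+1+i}` when `(i+1) + m' ≤ r` and `v_{(d-i)‾}` otherwise. -/
def rowR (r m' d i : ℕ) : ℕ := if i + 1 + m' ≤ r then m' + i else 2*r + i - d

/-- `Δ^L(Y)`: determinant of the `d × d` submatrix of `x^L(Y)` with rows `ι(R)` and
columns `1, …, d`. -/
def DeltaL (r m m' d : ℕ) (Y : ℕ → ℕ → ℂ) : ℂ :=
  (Matrix.of fun i j : Fin d => ent (xL r m d Y) (rowR r m' d (i : ℕ)) (j : ℕ)).det

/-- `C̄(l,k) = Y_{l,k-1}/Y_{l,k}`. -/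
def Cbar (Y : ℕ → ℕ → ℂ) (l k : ℕ) : ℂ := Y l (k - 1) / Y l k

/-- `C(l,k) = Y_{l,k+1}/Y_{l+1,k}`. -/
def Cc (Y : ℕ → ℕ → ℂ) (l k : ℕ) : ℂ := Y l (k + 1) / Y (l + 1) k

/-- `|·| : J → ℕ` in the 0-indexed natural encoding of `J`. -/
def absV (r p : ℕ) : ℕ := if p < r then p + 1 else 2*r - p


/-- `A` encodes a path `p ∈ X_d(m,m')` (Definition 6.2): `A s i` (for `0 ≤ s ≤ m`,
`1 ≤ i ≤ d`) is the 0-indexed natural encoding of `a^{(s)}_i ∈ J` (unbarred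
`j ↦ j - 1`, barred `j̄ ↦ 2r - j`; the order of `J` is the natural order, and an
element is barred iff its encoding is `≥ r`).  The five clauses are conditions
(i)+(ii), (iii), (iv) (twice) and (v) of Definition 6.2. -/
def IsPath (r m m' d : ℕ) (A : ℕ → ℕ → ℕ) : Prop :=
  (∀ s, s ≤ m → ∀ i, 1 ≤ i → i ≤ d → A s i < 2*r) ∧
  (∀ s, s ≤ m → ∀ i, 1 ≤ i → i < d → A s i < A s (i+1)) ∧
  (∀ s, s < m → ∀ i, 1 ≤ i → i ≤ d →
      (A s i + 1 < r → (A (s+1) i = A s i ∨ A (s+1) i = A s i + 1)) ∧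
      A s i ≤ A (s+1) i) ∧
  (∀ i, 1 ≤ i → i ≤ d → A 0 i = i - 1 ∧ A m i = rowR r m' d (i - 1)) ∧
  (∀ s, s < m → ∀ i, 1 ≤ i → i < d → r ≤ A (s+1) i →
      absV r (A s (i+1)) < absV r (A (s+1) i))

/-- The set `{l^{(1)}_i, …, l^{(m-m')}_i}` attached to (the `i`-th sequence of) a
path, as in (6.11), (6.12). -/
def lSet (r m m' : ℕ) (A : ℕ → ℕ → ℕ) (i : ℕ) : Finset ℕ :=
  if i + m' ≤ r then (Finset.range m).filter (fun s => A s i = A (s+1) i)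
  else (Finset.range (m + r + 1 - (i + m'))).filter
         (fun s => (A s i < r ∧ A s i = A (s+1) i) ∨ r ≤ A s i)

/-- `l^{(s)}_i` (for `1 ≤ s ≤ m-m'`): the `s`-th smallest element of `lSet`. -/
def lv (r m m' : ℕ) (A : ℕ → ℕ → ℕ) (i s : ℕ) : ℕ :=
  ((lSet r m m' A i).sort (· ≤ ·)).getD (s - 1) 0

/-- `k^{(s)}_i := a^{(l^{(s)}_i)}_i`. -/
def kv (r m m' : ℕ) (A : ℕ → ℕ → ℕ) (i s : ℕ) : ℕ := A (lv r m m' A i s) i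

/-- `δ_i`: the number of `s ∈ {1, …, m-m'}` with `k^{(s)}_i` unbarred. -/
def dv (r m m' : ℕ) (A : ℕ → ℕ → ℕ) (i : ℕ) : ℕ :=
  ((Finset.Icc 1 (m - m')).filter (fun s => kv r m m' A i s < r)).card

lemma countP_sorted : ∀ (L : List ℕ), L.Pairwise (· < ·) → ∀ j (hj : j < L.length),
    L.countP (fun x => decide (x < L.get ⟨j, hj⟩)) = j := by
  intro L
  induction L with
  | nil => intro _ j hj; simp at hj
  | cons a L ih =>
    intro hs j hj
    have ha : ∀ b ∈ L, a < b := fun b hb => (List.pairwise_cons.mp hs).1 b hb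
    match j with
    | 0 =>
      simp only [List.get, List.countP_cons]
      have h1 : L.countP (fun x => decide (x < a)) = 0 := by
        rw [List.countP_eq_zero]
        intro b hb
        simp only [decide_eq_true_eq]
        exact fun h => absurd (ha b hb) (by omega)
      simp [h1]
    | j + 1 =>
      have hj' : j < L.length := by simpa using hj
      have hget : (a :: L).get ⟨j+1, hj⟩ = L.get ⟨j, hj'⟩ := rfl
      rw [hget, List.countP_cons]
      have h1 := ih (List.pairwise_cons.mp hs).2 j hj'
      have h2 : a < L.get ⟨j, hj'⟩ := ha _ (L.get_mem _)
      simp only [List.get_eq_getElem] at h1 h2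
      simp [h1, h2]

lemma sort_getD_spec (F : Finset ℕ) (j : ℕ) (hj : j < F.card) :
    ((F.sort (· ≤ ·)).getD j 0) ∈ F ∧
      (F.filter (fun x => x < (F.sort (· ≤ ·)).getD j 0)).card = j := by
  set L := F.sort (· ≤ ·) with hL
  have hlen : L.length = F.card := Finset.length_sort _
  have hj' : j < L.length := by omega
  have hget : L.getD j 0 = L.get ⟨j, hj'⟩ := List.getD_eq_get _ _ ⟨j, hj'⟩
  constructor
  · rw [hget]; exact Finset.mem_sort (· ≤ ·) |>.mp (L.get_mem _)
  · have hsorted : L.Pairwise (· < ·) := (F.sortedLT_sort).pairwise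
    have hcnt := countP_sorted L hsorted j hj'
    have hcard : (F.filter (fun x => x < L.getD j 0)).card
        = L.countP (fun x => decide (x < L.getD j 0)) := by
      have h1 : (F.filter (fun x => x < L.getD j 0)).card
          = Multiset.card (F.val.filter (fun x => x < L.getD j 0)) := rfl
      rw [h1, ← Finset.sort_eq F (· ≤ ·)]
      simp only [← hL, Multiset.filter_coe, Multiset.coe_card]
      rw [List.countP_eq_length_filter]
    rw [hcard, hget] at *
    exact hcnt


lemma sort_getD_eq (F : Finset ℕ) (j t : ℕ) (hj : j < F.card) (ht : t ∈ F)
    (hc : (F.filter (fun x => x < t)).card = j) :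
    (F.sort (· ≤ ·)).getD j 0 = t := by
  obtain ⟨hmem, hcnt⟩ := sort_getD_spec F j hj
  set u := (F.sort (· ≤ ·)).getD j 0 with hu
  rcases lt_trichotomy u t with h | h | h
  · exfalso
    have hss : F.filter (fun x => x < u) ⊂ F.filter (fun x => x < t) := by
      refine (Finset.ssubset_iff_of_subset ?_).mpr ⟨u, ?_, ?_⟩
      · intro x hx
        simp only [Finset.mem_filter] at hx ⊢
        exact ⟨hx.1, hx.2.trans h⟩
      · exact Finset.mem_filter.mpr ⟨hmem, h⟩
      · simp only [Finset.mem_filter, not_and]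
        intro _
        omega
    have := Finset.card_lt_card hss
    omega
  · exact h
  · exfalso
    have hss : F.filter (fun x => x < t) ⊂ F.filter (fun x => x < u) := by
      refine (Finset.ssubset_iff_of_subset ?_).mpr ⟨t, ?_, ?_⟩
      · intro x hx
        simp only [Finset.mem_filter] at hx ⊢
        exact ⟨hx.1, hx.2.trans h⟩
      · exact Finset.mem_filter.mpr ⟨ht, h⟩
      · simp only [Finset.mem_filter, not_and]
        intro _
        omega
    have := Finset.card_lt_card hss
    omega



def barT (r : ℕ) (A : ℕ → ℕ → ℕ) (i : ℕ) : ℕ := sInf {s | r ≤ A s i}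

section PathLemmas

variable {r m m' d : ℕ} {A : ℕ → ℕ → ℕ}

lemma path_mono (hA : IsPath r m m' d A) {i : ℕ} (hi1 : 1 ≤ i) (hid : i ≤ d) :
    ∀ u v, u ≤ v → v ≤ m → A u i ≤ A v i := by
  intro u v huv
  induction v, huv using Nat.le_induction with
  | base => intro _; exact le_rfl
  | succ v hv ih =>
    intro hvm
    exact le_trans (ih (by omega)) ((hA.2.2.1 v (by omega) i hi1 hid).2)

/-- While unbarred, value + #rests + 1 = i + t. -/
lemma value_formula (hA : IsPath r m m' d A) {i : ℕ} (hi1 : 1 ≤ i) (hid : i ≤ d) :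
    ∀ t, t ≤ m → A t i < r →
      A t i + ((Finset.range t).filter (fun u => A u i = A (u + 1) i)).card + 1 = i + t := by
  intro t
  induction t with
  | zero =>
    intro _ _
    have h0 := (hA.2.2.2.1 i hi1 hid).1
    simp [h0]
    omega
  | succ t ih =>
    intro htm hAr
    have hstep := hA.2.2.1 t (by omega) i hi1 hid
    have hAt : A t i < r := by omega
    have ih' := ih (by omega) hAt
    have hfe : (Finset.range (t+1)).filter (fun u => A u i = A (u + 1) i)
        = if A t i = A (t+1) i then insert t ((Finset.range t).filter (fun u => A u i = A (u + 1) i))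
          else (Finset.range t).filter (fun u => A u i = A (u + 1) i) := by
      rw [Finset.range_add_one, Finset.filter_insert]
    by_cases hrest : A t i = A (t+1) i
    · rw [hfe, if_pos hrest, Finset.card_insert_of_notMem (by simp)]
      omega
    · have hup : A (t+1) i = A t i + 1 := by
        by_cases hc : A t i + 1 < r
        · rcases hstep.1 hc with h | h
          · omega
          · exact h
        · omega
      rw [hfe, if_neg hrest]
      omega

/-- Crossing into the barred region happens from value `r-1`. -/
lemma path_crossing (hA : IsPath r m m' d A) {i s : ℕ} (hi1 : 1 ≤ i) (hid : i ≤ d)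
    (hs : s < m) (h1 : A s i < r) (h2 : r ≤ A (s+1) i) : A s i + 1 = r := by
  have hstep := hA.2.2.1 s hs i hi1 hid
  by_cases hc : A s i + 1 < r
  · rcases hstep.1 hc with h | h <;> omega
  · omega

/-- Condition (v): once column `i` is barred, column `i+1` is barred and strictly larger
one step earlier. -/
lemma path_barOrder (hA : IsPath r m m' d A) {i s : ℕ} (hi1 : 1 ≤ i) (hid : i < d)
    (hs : s < m) (hb : r ≤ A (s+1) i) :
    r ≤ A s (i+1) ∧ A (s+1) i < A s (i+1) := by
  have h5 := hA.2.2.2.2 s hs i hi1 hid hb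
  have hb1 : A (s+1) i < 2*r := hA.1 (s+1) (by omega) i hi1 (by omega)
  have hb2 : A s (i+1) < 2*r := hA.1 s (by omega) (i+1) (by omega) hid
  have hlt : A s i < A s (i+1) := hA.2.1 s (by omega) i hi1 hid
  have habs1 : absV r (A (s+1) i) = 2*r - A (s+1) i := by
    unfold absV; rw [if_neg (by omega)]
  have hbar : r ≤ A s (i+1) := by
    by_contra hcon
    push_neg at hcon
    have habs2 : absV r (A s (i+1)) = A s (i+1) + 1 := by
      unfold absV; rw [if_pos hcon]
    have hstep := hA.2.2.1 s hs i hi1 (by omega)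
    by_cases hc : A s i + 1 < r
    · rcases hstep.1 hc with h | h <;> omega
    · omega
  have habs2 : absV r (A s (i+1)) = 2*r - A s (i+1) := by
    unfold absV; rw [if_neg (by omega)]
  constructor
  · exact hbar
  · omega

lemma barT_spec (hA : IsPath r m m' d A) (hdr : d ≤ r) {i : ℕ}
    (hi1 : 1 ≤ i) (hid : i ≤ d) (hbar : r < i + m') :
    1 ≤ barT r A i ∧ barT r A i ≤ m ∧ r ≤ A (barT r A i) i ∧
      (∀ u, u < barT r A i → A u i < r) ∧ A (barT r A i - 1) i + 1 = r := by
  have hmE : r ≤ A m i := by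
    have h4 := (hA.2.2.2.1 i hi1 hid).2
    unfold rowR at h4
    rw [if_neg (by omega)] at h4
    omega
  have hTm : barT r A i ≤ m := Nat.sInf_le hmE
  have hT : r ≤ A (barT r A i) i := Nat.sInf_mem (⟨m, hmE⟩ : Set.Nonempty {s | r ≤ A s i})
  have hunder : ∀ u, u < barT r A i → A u i < r := by
    intro u hu
    by_contra hcon
    push_neg at hcon
    have h9 := Nat.sInf_le (show u ∈ {s | r ≤ A s i} from hcon)
    have hb9 : barT r A i = sInf {s | r ≤ A s i} := rfl
    rw [← hb9] at h9
    omega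
  have hT1 : 1 ≤ barT r A i := by
    rcases Nat.eq_zero_or_pos (barT r A i) with h | h
    · exfalso
      have h0 := (hA.2.2.2.1 i hi1 hid).1
      rw [h] at hT
      omega
    · exact h
  refine ⟨hT1, hTm, hT, hunder, ?_⟩
  exact path_crossing hA hi1 hid (show barT r A i - 1 < m by omega)
    (hunder _ (by omega)) (by rw [show barT r A i - 1 + 1 = barT r A i by omega]; exact hT)

lemma barT_succ (hA : IsPath r m m' d A) (hdr : d ≤ r) {i : ℕ}
    (hi1 : 1 ≤ i) (hid : i < d) (hbar : r < i + m') :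
    barT r A (i+1) + 1 ≤ barT r A i := by
  obtain ⟨hT1, hTm, hT, hunder, hcross⟩ := barT_spec hA hdr hi1 (le_of_lt hid) hbar
  have hb := path_barOrder hA hi1 hid (show barT r A i - 1 < m by omega)
    (by rw [show barT r A i - 1 + 1 = barT r A i by omega]; exact hT)
  have : barT r A (i+1) ≤ barT r A i - 1 :=
    Nat.sInf_le (show barT r A i - 1 ∈ {s | r ≤ A s (i+1)} from hb.1)
  omega

lemma barT_window (hA : IsPath r m m' d A) (hdr : d ≤ r) (hm'r : m' ≤ r) :
    ∀ i, 1 ≤ i → i ≤ d → r < i + m' → barT r A i + i + m' ≤ m + r + 1 := by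
  intro i
  induction i with
  | zero => intro h; omega
  | succ i ih =>
    intro hi1 hid hbar
    by_cases hc : r < i + m'
    · have hi1' : 1 ≤ i := by omega
      have h7 := barT_succ hA hdr hi1' (by omega) hc
      have := ih (by omega) (by omega) hc
      omega
    · obtain ⟨_, hTm, _, _, _⟩ := barT_spec hA hdr (show 1 ≤ i+1 by omega) hid hbar
      omega

lemma lSet_barred (hA : IsPath r m m' d A) (hdr : d ≤ r) (hm'r : m' ≤ r) {i : ℕ}
    (hi1 : 1 ≤ i) (hid : i ≤ d) (hbar : r < i + m') :
    lSet r m m' A i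
      = ((Finset.range (barT r A i - 1)).filter (fun u => A u i = A (u + 1) i))
        ∪ Finset.Ico (barT r A i) (m + r + 1 - (i + m')) := by
  obtain ⟨hT1, hTm, hT, hunder, hcross⟩ := barT_spec hA hdr hi1 hid hbar
  have hW := barT_window hA hdr hm'r i hi1 hid hbar
  unfold lSet
  rw [if_neg (by omega)]
  ext u
  simp only [Finset.mem_filter, Finset.mem_range, Finset.mem_union, Finset.mem_Ico]
  constructor
  · rintro ⟨huW, hcond⟩
    rcases hcond with ⟨hur, hrest⟩ | hub
    · left
      have huT : u < barT r A i := by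
        by_contra hcon
        push_neg at hcon
        have := path_mono hA hi1 hid (barT r A i) u hcon (by omega)
        omega
      refine ⟨?_, hrest⟩
      by_contra hcon
      have hu : u = barT r A i - 1 := by omega
      rw [hu, show barT r A i - 1 + 1 = barT r A i by omega] at hrest
      rw [hu] at hur
      omega
    · right
      refine ⟨?_, huW⟩
      by_contra hcon
      push_neg at hcon
      have := hunder u hcon
      omega
  · rintro (⟨huT, hrest⟩ | ⟨hTu, huW⟩)
    · exact ⟨by omega, Or.inl ⟨hunder u (by omega), hrest⟩⟩
    · have : r ≤ A u i := le_trans hT (path_mono hA hi1 hid (barT r A i) u hTu (by omega))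
      exact ⟨huW, Or.inr this⟩

lemma col_unbarred (hA : IsPath r m m' d A) {i : ℕ} (hi1 : 1 ≤ i) (hid : i ≤ d)
    (hc : i + m' ≤ r) : ∀ t, t ≤ m → A t i < r := by
  intro t htm
  have h4 := (hA.2.2.2.1 i hi1 hid).2
  unfold rowR at h4
  rw [if_pos (by omega)] at h4
  have := path_mono hA hi1 hid t m htm le_rfl
  omega

lemma card_lSet (hA : IsPath r m m' d A) (hdr : d ≤ r) (hm'r : m' ≤ r) (hm'm : m' ≤ m)
    {i : ℕ} (hi1 : 1 ≤ i) (hid : i ≤ d) :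
    (lSet r m m' A i).card = m - m' := by
  by_cases hc : i + m' ≤ r
  · have hAm : A m i < r := col_unbarred hA hi1 hid hc m le_rfl
    have hv := value_formula hA hi1 hid m le_rfl hAm
    have h4 := (hA.2.2.2.1 i hi1 hid).2
    unfold rowR at h4
    rw [if_pos (by omega)] at h4
    unfold lSet
    rw [if_pos hc]
    omega
  · push_neg at hc
    obtain ⟨hT1, hTm, hT, hunder, hcross⟩ := barT_spec hA hdr hi1 hid hc
    have hW := barT_window hA hdr hm'r i hi1 hid hc
    rw [lSet_barred hA hdr hm'r hi1 hid hc]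
    rw [Finset.card_union_of_disjoint (by
      rw [Finset.disjoint_left]
      intro u hu hu'
      simp only [Finset.mem_filter, Finset.mem_range] at hu
      simp only [Finset.mem_Ico] at hu'
      omega)]
    have hv := value_formula hA hi1 hid (barT r A i - 1) (by omega)
      (hunder _ (by omega))
    rw [Nat.card_Ico]
    omega

lemma mem_lSet_lt (hm'r : m' ≤ r) {i u : ℕ} (hu : u ∈ lSet r m m' A i) : u < m := by
  unfold lSet at hu
  by_cases hc : i + m' ≤ r
  · rw [if_pos hc] at hu
    simp only [Finset.mem_filter, Finset.mem_range] at hu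
    exact hu.1
  · rw [if_neg hc] at hu
    simp only [Finset.mem_filter, Finset.mem_range] at hu
    omega

/-- Count of `lSet` elements below a barred time `t`. -/
lemma barred_count (hA : IsPath r m m' d A) (hdr : d ≤ r) (hm'r : m' ≤ r) {i t : ℕ}
    (hi1 : 1 ≤ i) (hid : i ≤ d) (hbar : r < i + m')
    (hTt : barT r A i ≤ t) (htW : t + (i + m') < m + r + 1) :
    t ∈ lSet r m m' A i ∧
      ((lSet r m m' A i).filter (fun x => x < t)).card + r + 1 = i + t := by
  obtain ⟨hT1, hTm, hT, hunder, hcross⟩ := barT_spec hA hdr hi1 hid hbar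
  have hW := barT_window hA hdr hm'r i hi1 hid hbar
  rw [lSet_barred hA hdr hm'r hi1 hid hbar]
  constructor
  · exact Finset.mem_union_right _ (Finset.mem_Ico.mpr ⟨hTt, by omega⟩)
  · have hfu : (((Finset.range (barT r A i - 1)).filter (fun u => A u i = A (u + 1) i))
        ∪ Finset.Ico (barT r A i) (m + r + 1 - (i + m'))).filter (fun x => x < t)
        = ((Finset.range (barT r A i - 1)).filter (fun u => A u i = A (u + 1) i))
          ∪ Finset.Ico (barT r A i) t := by
      ext u
      simp only [Finset.mem_filter, Finset.mem_range, Finset.mem_union, Finset.mem_Ico]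
      omega
    rw [hfu, Finset.card_union_of_disjoint (by
      rw [Finset.disjoint_left]
      intro u hu hu'
      simp only [Finset.mem_filter, Finset.mem_range] at hu
      simp only [Finset.mem_Ico] at hu'
      omega)]
    have hv := value_formula hA hi1 hid (barT r A i - 1) (by omega) (hunder _ (by omega))
    rw [Nat.card_Ico]
    omega

/-- Characterization of `lv` when the corresponding `kv` is unbarred. -/
lemma lv_unbarred (hA : IsPath r m m' d A) (hdr : d ≤ r) (hm'r : m' ≤ r) (hm'm : m' ≤ m)
    {i s : ℕ} (hi1 : 1 ≤ i) (hid : i ≤ d) (hs1 : 1 ≤ s) (hs2 : s ≤ m - m')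
    (hk : A (lv r m m' A i s) i < r) :
    A (lv r m m' A i s) i = A (lv r m m' A i s + 1) i ∧
    ((Finset.range (lv r m m' A i s)).filter (fun u => A u i = A (u + 1) i)).card + 1 = s ∧
    lv r m m' A i s + 1 ≤ m ∧
    A (lv r m m' A i s) i + s = i + lv r m m' A i s := by
  have hcard := card_lSet hA hdr hm'r hm'm hi1 hid
  have hj : s - 1 < (lSet r m m' A i).card := by omega
  obtain ⟨hmem, hcnt⟩ := sort_getD_spec (lSet r m m' A i) (s-1) hj
  have hteq : lv r m m' A i s = ((lSet r m m' A i).sort (· ≤ ·)).getD (s-1) 0 := rfl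
  rw [← hteq] at hmem hcnt
  by_cases hc : i + m' ≤ r
  · have hFS : lSet r m m' A i = (Finset.range m).filter (fun u => A u i = A (u+1) i) := by
      unfold lSet; rw [if_pos hc]
    rw [hFS] at hmem hcnt
    simp only [Finset.mem_filter, Finset.mem_range] at hmem
    obtain ⟨htm, hrest⟩ := hmem
    have hcount : ((Finset.range m).filter (fun u => A u i = A (u+1) i)).filter
          (fun x => x < lv r m m' A i s)
        = (Finset.range (lv r m m' A i s)).filter (fun u => A u i = A (u + 1) i) := by
      ext u
      simp only [Finset.mem_filter, Finset.mem_range]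
      omega
    rw [hcount] at hcnt
    have hv := value_formula hA hi1 hid (lv r m m' A i s) (by omega) hk
    exact ⟨hrest, by omega, by omega, by omega⟩
  · push_neg at hc
    obtain ⟨hT1, hTm, hT, hunder, hcross⟩ := barT_spec hA hdr hi1 hid hc
    rw [lSet_barred hA hdr hm'r hi1 hid hc] at hmem hcnt
    have hmem' : lv r m m' A i s < barT r A i - 1 ∧
        A (lv r m m' A i s) i = A (lv r m m' A i s + 1) i := by
      rcases Finset.mem_union.mp hmem with h | h
      · simp only [Finset.mem_filter, Finset.mem_range] at h
        exact h
      · exfalso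
        simp only [Finset.mem_Ico] at h
        have := path_mono hA hi1 hid (barT r A i) (lv r m m' A i s) h.1 (by omega)
        omega
    obtain ⟨htT, hrest⟩ := hmem'
    have hcount : (((Finset.range (barT r A i - 1)).filter (fun u => A u i = A (u + 1) i))
          ∪ Finset.Ico (barT r A i) (m + r + 1 - (i + m'))).filter
            (fun x => x < lv r m m' A i s)
        = (Finset.range (lv r m m' A i s)).filter (fun u => A u i = A (u + 1) i) := by
      ext u
      simp only [Finset.mem_filter, Finset.mem_range, Finset.mem_union, Finset.mem_Ico]
      omega
    rw [hcount] at hcnt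
    have hv := value_formula hA hi1 hid (lv r m m' A i s) (by omega) hk
    exact ⟨hrest, by omega, by omega, by omega⟩

/-- Characterization of `lv` when the corresponding `kv` is barred. -/
lemma lv_barred (hA : IsPath r m m' d A) (hdr : d ≤ r) (hm'r : m' ≤ r) (hm'm : m' ≤ m)
    {i s : ℕ} (hi1 : 1 ≤ i) (hid : i ≤ d) (hs1 : 1 ≤ s) (hs2 : s ≤ m - m')
    (hk : r ≤ A (lv r m m' A i s) i) :
    r < i + m' ∧ barT r A i ≤ lv r m m' A i s ∧
      lv r m m' A i s + (i + m') < m + r + 1 ∧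
      i + lv r m m' A i s = r + s := by
  have hcard := card_lSet hA hdr hm'r hm'm hi1 hid
  have hj : s - 1 < (lSet r m m' A i).card := by omega
  obtain ⟨hmem, hcnt⟩ := sort_getD_spec (lSet r m m' A i) (s-1) hj
  have hteq : lv r m m' A i s = ((lSet r m m' A i).sort (· ≤ ·)).getD (s-1) 0 := rfl
  rw [← hteq] at hmem hcnt
  have hc : r < i + m' := by
    by_contra hcon
    push_neg at hcon
    have htm : lv r m m' A i s < m := mem_lSet_lt hm'r hmem
    have := col_unbarred hA hi1 hid hcon (lv r m m' A i s) (by omega)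
    omega
  obtain ⟨hT1, hTm, hT, hunder, hcross⟩ := barT_spec hA hdr hi1 hid hc
  have hW := barT_window hA hdr hm'r i hi1 hid hc
  have hmem' : barT r A i ≤ lv r m m' A i s ∧
      lv r m m' A i s < m + r + 1 - (i + m') := by
    rw [lSet_barred hA hdr hm'r hi1 hid hc] at hmem
    rcases Finset.mem_union.mp hmem with h | h
    · exfalso
      simp only [Finset.mem_filter, Finset.mem_range] at h
      have := hunder (lv r m m' A i s) (by omega)
      omega
    · exact Finset.mem_Ico.mp h
  obtain ⟨h1, h2⟩ := hmem'
  have hbc := (barred_count hA hdr hm'r hi1 hid hc h1 (by omega)).2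
  rw [hcnt] at hbc
  exact ⟨hc, h1, by omega, by omega⟩

lemma rest_mem_lSet (hm'r : m' ≤ r) {i t u : ℕ} (ht : t ∈ lSet r m m' A i) (hut : u < t)
    (hrest : A u i = A (u+1) i) (huA : A u i < r) : u ∈ lSet r m m' A i := by
  unfold lSet at ht ⊢
  by_cases hc : i + m' ≤ r
  · rw [if_pos hc] at ht ⊢
    simp only [Finset.mem_filter, Finset.mem_range] at ht ⊢
    exact ⟨by omega, hrest⟩
  · rw [if_neg hc] at ht ⊢
    simp only [Finset.mem_filter, Finset.mem_range] at ht ⊢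
    exact ⟨by omega, Or.inl ⟨huA, hrest⟩⟩

theorem path_kl_monotone'
    (hr : 2 ≤ r) (hm'1 : 1 ≤ m') (hm'm : m' ≤ m) (hmr : m ≤ r)
    (hd1 : 1 ≤ d) (hdr : d ≤ r) (hbig : r < m' + d)
    (hA : IsPath r m m' d A) :
    ∀ s, 1 ≤ s → s ≤ m - m' → ∀ i, 1 ≤ i → i < d →
      (kv r m m' A i s < r →
        kv r m m' A i s < kv r m m' A (i+1) s ∧
        lv r m m' A i s ≤ lv r m m' A (i+1) s) ∧
      (r ≤ kv r m m' A i s →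
        kv r m m' A i s < kv r m m' A (i+1) s ∧
        lv r m m' A i s = lv r m m' A (i+1) s + 1) := by
  have hm'r : m' ≤ r := le_trans hm'm hmr
  intro s hs1 hs2 i hi1 hid
  unfold kv
  have hi1' : 1 ≤ i + 1 := by omega
  have hid' : i + 1 ≤ d := by omega
  constructor
  · -- unbarred case
    intro hk
    by_cases hk2 : A (lv r m m' A (i+1) s) (i+1) < r
    · -- both unbarred
      obtain ⟨hrest1, hcntA, hm1, hf1⟩ :=
        lv_unbarred hA hdr hm'r hm'm hi1 (by omega) hs1 hs2 hk
      obtain ⟨hrest2, hcnt2, hm2, hf2⟩ :=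
        lv_unbarred hA hdr hm'r hm'm hi1' hid' hs1 hs2 hk2
      have hcard1 := card_lSet hA hdr hm'r hm'm hi1 (le_of_lt hid)
      have hj1 : s - 1 < (lSet r m m' A i).card := by omega
      obtain ⟨hmem1, hcnt1⟩ := sort_getD_spec (lSet r m m' A i) (s-1) hj1
      have hteq1 : lv r m m' A i s = ((lSet r m m' A i).sort (· ≤ ·)).getD (s-1) 0 := rfl
      rw [← hteq1] at hmem1 hcnt1
      set t1 := lv r m m' A i s with ht1def
      set t2 := lv r m m' A (i+1) s with ht2def
      have hle : t1 ≤ t2 := by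
        by_contra hcon
        push_neg at hcon
        have hc2 : ((Finset.range (t2+1)).filter (fun u => A u (i+1) = A (u + 1) (i+1))).card
            = s := by
          rw [Finset.range_add_one, Finset.filter_insert, if_pos hrest2,
            Finset.card_insert_of_notMem (by simp)]
          omega
        have hv2 := value_formula hA hi1' hid' (t2+1) hm2 (by rw [← hrest2]; exact hk2)
        have hsub : (Finset.range (t2+1)).filter (fun u => A u i = A (u + 1) i)
            ⊆ (lSet r m m' A i).filter (fun x => x < t1) := by
          intro u hu
          simp only [Finset.mem_filter, Finset.mem_range] at hu
          obtain ⟨hu1, hu2⟩ := hu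
          have hut : u < t1 := by omega
          have huA : A u i < r := by
            have := path_mono hA hi1 (le_of_lt hid) u t1 (by omega) (by omega)
            omega
          exact Finset.mem_filter.mpr ⟨rest_mem_lSet hm'r hmem1 hut hu2 huA, hut⟩
        have hcardle := Finset.card_le_card hsub
        rw [hcnt1] at hcardle
        have hv1 := value_formula hA hi1 (le_of_lt hid) (t2+1) (by omega)
          (by
            have := path_mono hA hi1 (le_of_lt hid) (t2+1) t1 (by omega) (by omega)
            omega)
        have hord := hA.2.1 (t2+1) (by omega) i hi1 hid
        rw [hc2] at hv2
        omega
      refine ⟨by omega, hle⟩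
    · -- k_i unbarred, k_{i+1} barred
      push_neg at hk2
      obtain ⟨hrest1, hcntA, hm1, hf1⟩ :=
        lv_unbarred hA hdr hm'r hm'm hi1 (by omega) hs1 hs2 hk
      obtain ⟨hbar2, hT2t, htW2, heq2⟩ :=
        lv_barred hA hdr hm'r hm'm hi1' hid' hs1 hs2 hk2
      refine ⟨by omega, by omega⟩
  · -- barred case
    intro hk
    obtain ⟨hbar1, hT1t, htW1, heq1⟩ :=
      lv_barred hA hdr hm'r hm'm hi1 (le_of_lt hid) hs1 hs2 hk
    obtain ⟨hT11, hT1m, hT1A, hunder1, hcross1⟩ :=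
      barT_spec hA hdr hi1 (le_of_lt hid) hbar1
    have hsucc := barT_succ hA hdr hi1 hid hbar1
    set t1 := lv r m m' A i s with ht1def
    have ht1m : t1 < m := by omega
    have hbar2 : r < (i+1) + m' := by omega
    have hbc := barred_count hA hdr hm'r hi1' hid' hbar2
      (show barT r A (i+1) ≤ t1 - 1 by omega)
      (show t1 - 1 + ((i+1) + m') < m + r + 1 by omega)
    have hcard2 := card_lSet hA hdr hm'r hm'm hi1' hid'
    have hlv2 : lv r m m' A (i+1) s = t1 - 1 :=
      sort_getD_eq (lSet r m m' A (i+1)) (s-1) (t1-1) (by omega) hbc.1 (by omega)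
    have hb := path_barOrder hA hi1 hid (show t1 - 1 < m by omega)
      (by rw [show t1 - 1 + 1 = t1 by omega]; exact hk)
    rw [show t1 - 1 + 1 = t1 by omega] at hb
    rw [hlv2]
    exact ⟨hb.2, by omega⟩

end PathLemmas

/- **Statement 14** (Lemma 6.15 (ii)): if `k^{(s)}_i` is unbarred then
`k^{(s)}_i < k^{(s)}_{i+1}` and `l^{(s)}_i ≤ l^{(s)}_{i+1}`; if `k^{(s)}_i` is
barred then `k^{(s)}_i < k^{(s)}_{i+1}` and `l^{(s)}_i = l^{(s)}_{i+1} + 1`. -/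
theorem path_kl_monotone
    (r m m' d : ℕ) (hr : 2 ≤ r) (hm'1 : 1 ≤ m') (hm'm : m' ≤ m) (hmr : m ≤ r)
    (hd1 : 1 ≤ d) (hdr : d ≤ r) (hbig : r < m' + d)
    (A : ℕ → ℕ → ℕ) (hA : IsPath r m m' d A) :
    ∀ s, 1 ≤ s → s ≤ m - m' → ∀ i, 1 ≤ i → i < d →
      (kv r m m' A i s < r →
        kv r m m' A i s < kv r m m' A (i+1) s ∧
        lv r m m' A i s ≤ lv r m m' A (i+1) s) ∧
      (r ≤ kv r m m' A i s →
        kv r m m' A i s < kv r m m' A (i+1) s ∧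
        lv r m m' A i s = lv r m m' A (i+1) s + 1) :=
  path_kl_monotone' hr hm'1 hm'm hmr hd1 hdr hbig hA

end CTypeMinors
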